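/- If player II has a winning strategy in the game $\mathfrak G(X,Y,n-1,\epsilon/2)$ and $Y$ satisfies the $\epsilon/2$-extension property for all one-point extensions of $(n-1)$-point configurations in $\mathcal C$ (and symmetrically $X$), then player II has a winning strategy in $\mathfrak G(X,Y,n,\epsilon)$. -/

import Mathlib

/-- A configuration from the class `𝒞`: a finite metric space on `m` points with all
distances between distinct points in `[1/2,1]`. -/
def IsCConfig (m : ℕ) (dX : Fin m → Fin m → ℝ) : Prop :=
  (∀ i j, dX i j = dX j i) ∧ (∀ i, dX i i = 0) ∧
    ∀ i j, i ≠ j → dX i j ∈ Set.Icc (1/2 : ℝ) 1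

/-- The one-point extension property of a metric space `Z` (with error doubling):
for every configuration `X₀` from `𝒞`, every one-point extension `Y₀ = X₀ ∪ {y}` in `𝒞`
(given by the distances `dy i` from the new point), every `ε > 0`, and every tuple in `Z`
realizing `X₀` up to error `ε`, some point of `Z` extends it to a realization of `Y₀`
up to error `2ε`. -/
def ExtensionProperty (Z : Type*) [MetricSpace Z] : Prop :=
  ∀ (m : ℕ) (dX : Fin m → Fin m → ℝ) (dy : Fin m → ℝ),
    IsCConfig m dX → (∀ i, dy i ∈ Set.Icc (1/2 : ℝ) 1) →
    ∀ ε : ℝ, 0 < ε → ∀ z : Fin m → Z,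
      (∀ i j, i ≠ j → |dist (z i) (z j) - dX i j| < ε) →
      ∃ w : Z, (∀ i, |dist (z i) w - dy i| < 2 * ε) ∧
        (∀ i j, i ≠ j → |dist (z i) (z j) - dX i j| < 2 * ε)

/-- The set of histories (lists of pairs, most recent first) reachable in `n` rounds of
the Ehrenfeucht–Fraïssé game when player II plays according to the strategy
`(σX, σY)`: in each round player I picks a point of `X` (answered by `σX`) or a point
of `Y` (answered by `σY`). -/
def efPlays {X Y : Type*} (σX : List (X × Y) → X → Y) (σY : List (X × Y) → Y → X) :
    ℕ → Set (List (X × Y))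
  | 0 => {[]}
  | n + 1 => {h' | ∃ h ∈ efPlays σX σY n,
      (∃ a : X, h' = (a, σX h a) :: h) ∨ (∃ b : Y, h' = (σY h b, b) :: h)}

/-- Player II has a winning strategy in the `n`-round game `𝔊(X,Y,n,ε)`: a strategy all
of whose complete plays produce tuples with `|d_X(a_i,a_j) - d_Y(b_i,b_j)| < ε`. -/
def IIWins (X Y : Type*) [MetricSpace X] [MetricSpace Y] (n : ℕ) (ε : ℝ) : Prop :=
  ∃ (σX : List (X × Y) → X → Y) (σY : List (X × Y) → Y → X),
    ∀ h ∈ efPlays σX σY n, ∀ p ∈ h, ∀ q ∈ h,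
      |dist p.1 q.1 - dist p.2 q.2| < ε

lemma efPlays_length {X Y : Type*} (σX : List (X × Y) → X → Y) (σY : List (X × Y) → Y → X) :
    ∀ k, ∀ h ∈ efPlays σX σY k, h.length = k := by
  intro k
  induction k with
  | zero => intro h hh; simp only [efPlays, Set.mem_singleton_iff] at hh; simp [hh]
  | succ k ih =>
    intro h' hh'
    simp only [efPlays, Set.mem_setOf_eq] at hh'
    obtain ⟨h, hh, hc⟩ := hh'
    rcases hc with ⟨a, rfl⟩ | ⟨b, rfl⟩ <;> simp [ih h hh]

open Classical in
lemma key_lemma {X Y : Type*} [MetricSpace X] [MetricSpace Y]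
    (hX : ∀ x x' : X, x ≠ x' → dist x x' ∈ Set.Icc (1/2 : ℝ) 1)
    (hY : ∀ y y' : Y, y ≠ y' → dist y y' ∈ Set.Icc (1/2 : ℝ) 1)
    (hYext : ExtensionProperty Y)
    (ε : ℝ) (hε : 0 < ε) (hε1 : ε ≤ 1)
    (h : List (X × Y))
    (hd : ∀ p ∈ h, ∀ q ∈ h, |dist p.1 q.1 - dist p.2 q.2| < ε / 2)
    (a : X) :
    ∃ b : Y, ∀ p ∈ h, |dist p.1 a - dist p.2 b| < ε := by
  by_cases hmem : ∃ p ∈ h, p.1 = a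
  · obtain ⟨p, hp, hpa⟩ := hmem
    refine ⟨p.2, fun q hq => ?_⟩
    rw [← hpa]
    exact lt_of_lt_of_le (hd q hq p hp) (by linarith)
  · push_neg at hmem
    -- pairs with equal first coordinates are equal
    have hfst : ∀ p ∈ h, ∀ q ∈ h, p.1 = q.1 → p = q := by
      intro p hp q hq hpq
      have h1 := hd p hp q hq
      rw [hpq, dist_self] at h1
      have h2 : dist p.2 q.2 < ε / 2 := by
        rw [abs_sub_comm] at h1; simpa using h1
      have : p.2 = q.2 := by
        by_contra hne
        have := (hY _ _ hne).1
        linarith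
      exact Prod.ext hpq this
    set l := h.dedup with hl
    have hmem' : ∀ p, p ∈ l ↔ p ∈ h := fun p => List.mem_dedup
    have hnd : l.Nodup := h.nodup_dedup
    set m := l.length with hm
    set g : Fin m → X × Y := fun i => l.get i with hg
    have hginj : Function.Injective g := List.nodup_iff_injective_get.mp hnd
    have hgmem : ∀ i, g i ∈ h := fun i => (hmem' _).mp (l.get_mem _)
    have hfne : ∀ i j : Fin m, i ≠ j → (g i).1 ≠ (g j).1 := by
      intro i j hij he
      exact hij (hginj (hfst _ (hgmem i) _ (hgmem j) he))
    obtain ⟨w, hw, -⟩ := hYext m (fun i j => dist (g i).1 (g j).1)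
      (fun i => dist (g i).1 a)
      ⟨fun i j => dist_comm _ _, fun i => dist_self _, fun i j hij => hX _ _ (hfne i j hij)⟩
      (fun i => hX _ _ (hmem _ (hgmem i)))
      (ε / 2) (by linarith) (fun i => (g i).2)
      (fun i j hij => by
        rw [abs_sub_comm]
        exact hd _ (hgmem i) _ (hgmem j))
    refine ⟨w, fun p hp => ?_⟩
    obtain ⟨i, hi⟩ := List.mem_iff_get.mp ((hmem' p).mpr hp)
    have := hw i
    rw [show l.get i = g i from rfl] at hi
    rw [← hi, abs_sub_comm]
    calc |dist (g i).2 w - dist (g i).1 a| < 2 * (ε / 2) := this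
    _ = ε := by ring

/-- Inductive step: if player II has a winning strategy in `𝔊(X,Y,n-1,ε/2)` and both
`X` and `Y` (metric spaces with distinct-point distances in `[1/2,1]`) satisfy the
one-point extension properties, then player II has a winning strategy in
`𝔊(X,Y,n,ε)`. -/
theorem stmt12 (X Y : Type*) [MetricSpace X] [MetricSpace Y]
    (hX : ∀ x x' : X, x ≠ x' → dist x x' ∈ Set.Icc (1/2 : ℝ) 1)
    (hY : ∀ y y' : Y, y ≠ y' → dist y y' ∈ Set.Icc (1/2 : ℝ) 1)
    (hXext : ExtensionProperty X) (hYext : ExtensionProperty Y)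
    (n : ℕ) (ε : ℝ) (hε : 0 < ε)
    (hprev : IIWins X Y (n - 1) (ε / 2)) :
    IIWins X Y n ε := by
  classical
  obtain ⟨σX₀, σY₀, hwin⟩ := hprev
  rcases lt_or_ge 1 ε with hε1 | hε1
  · -- trivial case ε > 1
    refine ⟨σX₀, σY₀, fun h _ p _ q _ => ?_⟩
    have d1 : dist p.1 q.1 ≤ 1 := by
      rcases eq_or_ne p.1 q.1 with he | he
      · rw [he, dist_self]; norm_num
      · exact (hX _ _ he).2
    have d2 : dist p.2 q.2 ≤ 1 := by
      rcases eq_or_ne p.2 q.2 with he | he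
      · rw [he, dist_self]; norm_num
      · exact (hY _ _ he).2
    have d1' : (0:ℝ) ≤ dist p.1 q.1 := dist_nonneg
    have d2' : (0:ℝ) ≤ dist p.2 q.2 := dist_nonneg
    rw [abs_sub_lt_iff]; constructor <;> linarith
  · rcases Nat.eq_zero_or_pos n with rfl | hn
    · refine ⟨σX₀, σY₀, fun h hh => ?_⟩
      simp only [efPlays, Set.mem_singleton_iff] at hh
      subst hh; simp
    · obtain ⟨k, rfl⟩ : ∃ k, n = k + 1 := ⟨n - 1, (Nat.succ_pred_eq_of_pos hn).symm⟩
      simp only [Nat.add_sub_cancel] at hwin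
      -- the modified strategies
      set σX' : List (X × Y) → X → Y := fun h a =>
        if hc : ∃ b : Y, ∀ p ∈ h, |dist p.1 a - dist p.2 b| < ε then
          if h.length = k then hc.choose else σX₀ h a
        else σX₀ h a with hσX'
      set σY' : List (X × Y) → Y → X := fun h b =>
        if hc : ∃ a : X, ∀ p ∈ h, |dist p.1 a - dist p.2 b| < ε then
          if h.length = k then hc.choose else σY₀ h b
        else σY₀ h b with hσY'
      have hagreeX : ∀ h a, h.length ≠ k → σX' h a = σX₀ h a := by
        intro h a hne; simp only [hσX']
        split_ifs <;> rfl
      have hagreeY : ∀ h b, h.length ≠ k → σY' h b = σY₀ h b := by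
        intro h b hne; simp only [hσY']
        split_ifs <;> rfl
      -- agreement of plays up to round k
      have hA : ∀ j ≤ k, efPlays σX' σY' j = efPlays σX₀ σY₀ j := by
        intro j hj
        induction j with
        | zero => rfl
        | succ j ih =>
          have hj' : j ≤ k := Nat.le_of_succ_le hj
          ext h'
          simp only [efPlays, Set.mem_setOf_eq, ih hj']
          constructor
          · rintro ⟨h, hh, hc⟩
            have hlen : h.length = j := efPlays_length σX₀ σY₀ j h hh
            have hlk : h.length ≠ k := by omega
            refine ⟨h, hh, ?_⟩
            rcases hc with ⟨a, rfl⟩ | ⟨b, rfl⟩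
            · exact Or.inl ⟨a, by rw [hagreeX h a hlk]⟩
            · exact Or.inr ⟨b, by rw [hagreeY h b hlk]⟩
          · rintro ⟨h, hh, hc⟩
            have hlen : h.length = j := efPlays_length σX₀ σY₀ j h hh
            have hlk : h.length ≠ k := by omega
            refine ⟨h, hh, ?_⟩
            rcases hc with ⟨a, rfl⟩ | ⟨b, rfl⟩
            · exact Or.inl ⟨a, by rw [hagreeX h a hlk]⟩
            · exact Or.inr ⟨b, by rw [hagreeY h b hlk]⟩
      refine ⟨σX', σY', ?_⟩
      intro h' hh'
      simp only [efPlays, Set.mem_setOf_eq, hA k le_rfl] at hh'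
      obtain ⟨h, hh, hc⟩ := hh'
      have hlen : h.length = k := efPlays_length σX₀ σY₀ k h hh
      have hd : ∀ p ∈ h, ∀ q ∈ h, |dist p.1 q.1 - dist p.2 q.2| < ε / 2 := hwin h hh
      rcases hc with ⟨a, rfl⟩ | ⟨b, rfl⟩
      · -- player I played in X
        have hex : ∃ b : Y, ∀ p ∈ h, |dist p.1 a - dist p.2 b| < ε :=
          key_lemma hX hY hYext ε hε hε1 h hd a
        have hb : ∀ p ∈ h, |dist p.1 a - dist p.2 (σX' h a)| < ε := by
          have := hex.choose_spec
          rw [hσX']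
          simp only [dif_pos hex, if_pos hlen]
          exact this
        rintro p hp q hq
        rcases List.mem_cons.mp hp with rfl | hp <;>
          rcases List.mem_cons.mp hq with h2 | hq
        · rw [h2]; simpa using hε
        · rw [dist_comm a q.1, dist_comm (σX' h a) q.2]
          exact hb q hq
        · subst h2
          exact hb p hp
        · exact lt_of_lt_of_le (hd p hp q hq) (by linarith)
      · -- player I played in Y
        have hex : ∃ a : X, ∀ p ∈ h, |dist p.1 a - dist p.2 b| < ε := by
          have hd' : ∀ p ∈ h.map Prod.swap, ∀ q ∈ h.map Prod.swap,
              |dist p.1 q.1 - dist p.2 q.2| < ε / 2 := by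
            rintro p hp q hq
            obtain ⟨p₀, hp₀, rfl⟩ := List.mem_map.mp hp
            obtain ⟨q₀, hq₀, rfl⟩ := List.mem_map.mp hq
            rw [abs_sub_comm]
            exact hd p₀ hp₀ q₀ hq₀
          obtain ⟨a, ha⟩ := key_lemma hY hX hXext ε hε hε1 (h.map Prod.swap) hd' b
          refine ⟨a, fun p hp => ?_⟩
          have := ha p.swap (List.mem_map.mpr ⟨p, hp, rfl⟩)
          rw [abs_sub_comm]
          exact this
        have hb : ∀ p ∈ h, |dist p.1 (σY' h b) - dist p.2 b| < ε := by
          have := hex.choose_spec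
          rw [hσY']
          simp only [dif_pos hex, if_pos hlen]
          exact this
        rintro p hp q hq
        rcases List.mem_cons.mp hp with rfl | hp <;>
          rcases List.mem_cons.mp hq with h2 | hq
        · rw [h2]; simpa using hε
        · rw [dist_comm (σY' h b) q.1, dist_comm b q.2]
          exact hb q hq
        · subst h2
          exact hb p hp
        · exact lt_of_lt_of_le (hd p hp q hq) (by linarith)
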